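/- For a real square matrix A, if there exists a symmetric positive definite matrix H such that HA + AᵀH is negative semidefinite, then every eigenvalue λ of A satisfies Re(λ) ≤ 0. -/

import Mathlib

open Matrix

lemma re_quad {n : ℕ} (M : Matrix (Fin n) (Fin n) ℝ) (v : Fin n → ℂ) :
    (star v ⬝ᵥ (M.map Complex.ofReal) *ᵥ v).re =
      (fun i => (v i).re) ⬝ᵥ M *ᵥ (fun i => (v i).re)
        + (fun i => (v i).im) ⬝ᵥ M *ᵥ (fun i => (v i).im) := by
  simp only [dotProduct, mulVec, map_apply, Finset.mul_sum, Complex.re_sum, Pi.star_apply]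
  rw [← Finset.sum_add_distrib]
  refine Finset.sum_congr rfl fun i _ => ?_
  rw [← Finset.sum_add_distrib]
  refine Finset.sum_congr rfl fun j _ => ?_
  simp [Complex.mul_re, Complex.mul_im]

/-- If `H A + Aᵀ H` is negative semidefinite for some SPD energy matrix `H`,
then every (complex) eigenvalue of `A` has nonpositive real part. -/
theorem energy_stability_dissipative {n : ℕ}
    (A H : Matrix (Fin n) (Fin n) ℝ)
    (hH : H.PosDef)
    (hdiss : ∀ x : Fin n → ℝ, x ⬝ᵥ (H * A + Aᵀ * H).mulVec x ≤ 0) :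
    ∀ lam ∈ spectrum ℂ (A.map (Complex.ofReal)), lam.re ≤ 0 := by
  intro lam hlam
  set AC := A.map (Complex.ofReal) with hACdef
  rw [spectrum.mem_iff] at hlam
  have hdet : (lam • (1 : Matrix (Fin n) (Fin n) ℂ) - AC).det = 0 := by
    by_contra h
    exact hlam (by
      rw [Algebra.algebraMap_eq_smul_one]
      exact (Matrix.isUnit_iff_isUnit_det _).mpr (isUnit_iff_ne_zero.mpr h))
  obtain ⟨v, hv0, hv⟩ := Matrix.exists_mulVec_eq_zero_iff.mpr hdet
  have heig : AC *ᵥ v = lam • v := by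
    have := hv
    rw [sub_mulVec, smul_mulVec, one_mulVec, sub_eq_zero] at this
    exact this.symm
  set x : Fin n → ℝ := fun i => (v i).re with hx
  set y : Fin n → ℝ := fun i => (v i).im with hy
  set q : ℂ := star v ⬝ᵥ (H.map Complex.ofReal) *ᵥ v with hq
  -- q.re > 0
  have hxy : x ≠ 0 ∨ y ≠ 0 := by
    by_contra h
    push_neg at h
    apply hv0
    funext i
    have h1 : x i = 0 := by rw [h.1]; rfl
    have h2 : y i = 0 := by rw [h.2]; rfl
    exact Complex.ext h1 h2
  have hqre : 0 < q.re := by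
    rw [hq, re_quad]
    have hx' : 0 ≤ x ⬝ᵥ H *ᵥ x := by
      rcases eq_or_ne x 0 with h | h
      · simp [h]
      · exact le_of_lt (hH.dotProduct_mulVec_pos h)
    have hy' : 0 ≤ y ⬝ᵥ H *ᵥ y := by
      rcases eq_or_ne y 0 with h | h
      · simp [h]
      · exact le_of_lt (hH.dotProduct_mulVec_pos h)
    rcases hxy with h | h
    · have := hH.dotProduct_mulVec_pos h; rw [star_trivial] at this; linarith
    · have := hH.dotProduct_mulVec_pos h; rw [star_trivial] at this; linarith
  -- the quadratic form of HA + AᵀH at v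
  set s : ℂ := star v ⬝ᵥ ((H * A + Aᵀ * H).map Complex.ofReal) *ᵥ v with hs
  have hsre : s.re ≤ 0 := by
    rw [hs, re_quad]
    exact add_nonpos (hdiss x) (hdiss y)
  have hmap : (H * A + Aᵀ * H).map Complex.ofReal
      = (H.map Complex.ofReal) * AC + ACᵀ * (H.map Complex.ofReal) := by
    ext i j
    simp [Matrix.mul_apply, hACdef]
  have hstarAC : AC *ᵥ star v = star (AC *ᵥ v) := by
    funext i
    simp only [mulVec, dotProduct, Pi.star_apply, star_sum]
    refine Finset.sum_congr rfl fun j _ => ?_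
    simp [hACdef, mul_comm]
  have hs_eq : s = lam * q + (starRingEnd ℂ) lam * q := by
    rw [hs, hmap, add_mulVec, dotProduct_add]
    congr 1
    · rw [← mulVec_mulVec, heig, mulVec_smul, dotProduct_smul, hq]
      rfl
    · rw [← mulVec_mulVec, dotProduct_mulVec, vecMul_transpose, hstarAC, heig, hq]
      rw [star_smul, smul_dotProduct]
      rfl
  have : s.re = 2 * lam.re * q.re := by
    rw [hs_eq]
    simp [Complex.add_re, Complex.mul_re]
    ring
  rw [this] at hsre
  nlinarith
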